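/- Let d ≥ 2 and m ≥ 2 be integers and g ≥ 0, L ≥ 0 real numbers. For the MBSP instance given by the zipper DAG Z(d,m) with P = 2 processors and cache capacity r = d+2, there exists a valid schedule whose synchronous cost is at most m + (2m + 2d)·g + (m+1)·L. -/

import Mathlib

namespace MBSP

/-- A transition (pebbling move) of a single processor. -/
inductive Op (ν : Type) where
  | load : ν → Op ν
  | save : ν → Op ν
  | compute : ν → Op ν
  | delete : ν → Op ν
deriving DecidableEq

/-- An MBSP instance: a DAG with compute weights `ω`, memory weights `μ`,
`P` processors, cache capacity `r`, communication cost `g` and synchronization cost `L`. -/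
structure Inst (ν : Type) where
  edge : ν → ν → Prop
  ω : ν → ℝ
  μ : ν → ℝ
  P : ℕ
  r : ℝ
  g : ℝ
  L : ℝ

variable {ν : Type} [DecidableEq ν]

def isSource (I : Inst ν) (v : ν) : Prop := ¬ ∃ u, I.edge u v

def isSink (I : Inst ν) (v : ν) : Prop := ¬ ∃ u, I.edge v u

def Acyclic (I : Inst ν) : Prop := ∀ v, ¬ Relation.TransGen I.edge v v

def opCost (I : Inst ν) : Op ν → ℝ
  | .load v => I.μ v * I.g
  | .save v => I.μ v * I.g
  | .compute v => I.ω v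
  | .delete _ => 0

def applyOp (R B : Finset ν) : Op ν → Finset ν × Finset ν
  | .load v => (insert v R, B)
  | .save v => (R, insert v B)
  | .compute v => (insert v R, B)
  | .delete v => (R.erase v, B)

def opOK (I : Inst ν) (R B : Finset ν) : Op ν → Prop
  | .load v => v ∈ B
  | .save v => v ∈ R
  | .compute v => (∃ u, I.edge u v) ∧ ∀ u, I.edge u v → u ∈ R
  | .delete _ => True

/-- The memory bound for a cache content `R`. -/
def memOK (I : Inst ν) (R : Finset ν) : Prop := ∑ v ∈ R, I.μ v ≤ I.r

/-- Run a sequence of transitions of one processor on a pair (cache, slow memory). -/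
def run (R B : Finset ν) : List (Op ν) → Finset ν × Finset ν
  | [] => (R, B)
  | op :: rest => run (applyOp R B op).1 (applyOp R B op).2 rest

/-- Validity of a sequence of transitions of one processor: every precondition holds
when the transition is applied and the memory bound holds throughout. -/
def seqValid (I : Inst ν) (R B : Finset ν) : List (Op ν) → Prop
  | [] => True
  | op :: rest => opOK I R B op ∧ memOK I (applyOp R B op).1 ∧
      seqValid I (applyOp R B op).1 (applyOp R B op).2 rest

/-- A superstep: for every processor, a compute phase (computes and deletes),
then a save phase, a delete phase and a load phase. -/
structure Superstep (ν : Type) (P : ℕ) where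
  comp : Fin P → List (Op ν)
  save : Fin P → List ν
  del : Fin P → List ν
  load : Fin P → List ν

structure Config (ν : Type) (P : ℕ) where
  R : Fin P → Finset ν
  B : Finset ν

abbrev Schedule (ν : Type) (P : ℕ) := List (Superstep ν P)

variable {P : ℕ}

def compOnly (l : List (Op ν)) : Prop :=
  ∀ op ∈ l, (∃ v, op = Op.compute v) ∨ (∃ v, op = Op.delete v)

def afterComp (c : Config ν P) (S : Superstep ν P) (p : Fin P) : Finset ν :=
  (run (c.R p) c.B (S.comp p)).1

/-- The shared slow memory after the save phases of all processors. -/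
def newB (c : Config ν P) (S : Superstep ν P) : Finset ν :=
  c.B ∪ Finset.univ.biUnion (fun p => (S.save p).toFinset)

def afterDel (c : Config ν P) (S : Superstep ν P) (p : Fin P) : Finset ν :=
  (S.del p).foldl Finset.erase (afterComp c S p)

def afterLoad (c : Config ν P) (S : Superstep ν P) (p : Fin P) : Finset ν :=
  afterDel c S p ∪ (S.load p).toFinset

/-- The configuration reached after executing a superstep. -/
def stepConfig (c : Config ν P) (S : Superstep ν P) : Config ν P :=
  ⟨fun p => afterLoad c S p, newB c S⟩

/-- Validity of a superstep at a configuration. -/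
def ssValid (I : Inst ν) (c : Config ν I.P) (S : Superstep ν I.P) : Prop :=
  (∀ p, compOnly (S.comp p)) ∧
  (∀ p, seqValid I (c.R p) c.B (S.comp p)) ∧
  (∀ p, ∀ v ∈ S.save p, v ∈ afterComp c S p) ∧
  (∀ p, ∀ v ∈ S.load p, v ∈ newB c S) ∧
  (∀ p, memOK I (afterLoad c S p))

def runSched (c : Config ν P) : Schedule ν P → Config ν P
  | [] => c
  | S :: rest => runSched (stepConfig c S) rest

def schedValidFrom (I : Inst ν) (c : Config ν I.P) : Schedule ν I.P → Prop
  | [] => True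
  | S :: rest => ssValid I c S ∧ schedValidFrom I (stepConfig c S) rest

/-- `B` is exactly the set of sources of the DAG. -/
def initB (I : Inst ν) (B : Finset ν) : Prop := ∀ v, v ∈ B ↔ isSource I v

/-- A valid MBSP schedule: starts with empty caches and the sources in slow memory,
every transition is legal and the memory bound holds throughout, and at the end
every sink is in slow memory. -/
def Valid (I : Inst ν) (sched : Schedule ν I.P) : Prop :=
  ∃ B0 : Finset ν, initB I B0 ∧
    schedValidFrom I ⟨fun _ => ∅, B0⟩ sched ∧
    ∀ v, isSink I v → v ∈ (runSched (⟨fun _ => ∅, B0⟩ : Config ν I.P) sched).B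

def listCost (I : Inst ν) (l : List (Op ν)) : ℝ := (l.map (opCost I)).sum

def ioCost (I : Inst ν) (l : List ν) : ℝ := (l.map (fun v => I.μ v * I.g)).sum

/-- The synchronous cost of a superstep. -/
noncomputable def ssCost (I : Inst ν) (S : Superstep ν I.P) : ℝ :=
  (⨆ p : Fin I.P, listCost I (S.comp p)) + (⨆ p : Fin I.P, ioCost I (S.save p)) +
    (⨆ p : Fin I.P, ioCost I (S.load p)) + I.L

/-- The synchronous cost of a schedule. -/
noncomputable def syncCost (I : Inst ν) (sched : Schedule ν I.P) : ℝ :=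
  (sched.map (ssCost I)).sum

/-- Finishing times of the saves in a save phase starting at time `t`. -/
def saveFinishes (I : Inst ν) : ℝ → List ν → List (ν × ℝ)
  | _, [] => []
  | t, v :: rest => (v, t + I.μ v * I.g) :: saveFinishes I (t + I.μ v * I.g) rest

def minSaveTime (entries : List (ν × ℝ)) (v : ν) : Option ℝ :=
  ((entries.filter (fun e => e.1 == v)).map Prod.snd).min?

/-- Finishing time of a load phase: each load waits for the value to be available
in slow memory (time `Γ v`). -/
def loadFold (I : Inst ν) (Γ : ν → Option ℝ) : ℝ → List ν → ℝ
  | t, [] => t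
  | t, v :: rest => loadFold I Γ (max t ((Γ v).getD 0) + I.μ v * I.g) rest

/-- One superstep of the asynchronous execution: updates the finishing time of
every processor and the availability times `Γ` of the values in slow memory. -/
def asyncSS (I : Inst ν) (S : Superstep ν I.P)
    (st : (Fin I.P → ℝ) × (ν → Option ℝ)) : (Fin I.P → ℝ) × (ν → Option ℝ) :=
  let t1 : Fin I.P → ℝ := fun p => st.1 p + listCost I (S.comp p)
  let entries : List (ν × ℝ) :=
    ((List.finRange I.P).map (fun p => saveFinishes I (t1 p) (S.save p))).flatten
  let Γ' : ν → Option ℝ := fun v => (st.2 v).orElse (fun _ => minSaveTime entries v)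
  let t2 : Fin I.P → ℝ := fun p => t1 p + ioCost I (S.save p)
  (fun p => loadFold I Γ' (t2 p) (S.load p), Γ')

def asyncRun (I : Inst ν) (st : (Fin I.P → ℝ) × (ν → Option ℝ)) :
    Schedule ν I.P → (Fin I.P → ℝ) × (ν → Option ℝ)
  | [] => st
  | S :: rest => asyncRun I (asyncSS I S st) rest

/-- The asynchronous cost (makespan) of a schedule. -/
noncomputable def asyncCost (I : Inst ν) (sched : Schedule ν I.P) : ℝ :=
  ⨆ p : Fin I.P, (asyncRun I (fun _ => (0 : ℝ), fun _ => none) sched).1 p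

end MBSP

namespace MBSP

/-- Nodes of the zipper DAG `Z(d,m)`: two groups `H₁`, `H₂` of `d` source nodes
each, and two chains `v_1,…,v_m` and `u_1,…,u_m` (index `i ∈ [m]` is `Fin`-value `i-1`). -/
inductive ZNode (d m : ℕ) where
  | h1 : Fin d → ZNode d m
  | h2 : Fin d → ZNode d m
  | v : Fin m → ZNode d m
  | u : Fin m → ZNode d m
deriving DecidableEq, Fintype

/-- Edges of the zipper DAG `Z(d,m)`. -/
def zEdge (d m : ℕ) : ZNode d m → ZNode d m → Prop
  | .v i, .v j => (j : ℕ) = (i : ℕ) + 1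
  | .u i, .u j => (j : ℕ) = (i : ℕ) + 1
  | .h1 _, .u i => Odd ((i : ℕ) + 1)
  | .h1 _, .v i => Even ((i : ℕ) + 1)
  | .h2 _, .v i => Odd ((i : ℕ) + 1)
  | .h2 _, .u i => Even ((i : ℕ) + 1)
  | _, _ => False

/-- The MBSP instance on the zipper DAG `Z(d,m)` with `P = 2` processors, cache
capacity `r`, communication cost `g` and synchronization cost `L`; all compute and
memory weights are `1`. -/
def zipper (d m : ℕ) (r g L : ℝ) : Inst (ZNode d m) where
  edge := zEdge d m
  ω := fun _ => 1
  μ := fun _ => 1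
  P := 2
  r := r
  g := g
  L := L

end MBSP

namespace MBSP

section ZAux

open Finset

/-- Fold of `Finset.erase` equals set difference. -/
lemma foldl_erase {ν : Type} [DecidableEq ν] (l : List ν) :
    ∀ s : Finset ν, l.foldl Finset.erase s = s \ l.toFinset := by
  induction l with
  | nil => intro s; simp
  | cons a l ih =>
      intro s
      rw [List.foldl_cons, ih]
      ext x
      simp [Finset.mem_erase, and_assoc]
      tauto

def hcon (d m : ℕ) : Fin 2 → Fin d → ZNode d m := ![ZNode.h1, ZNode.h2]

def Hf (d m : ℕ) (p : Fin 2) : Finset (ZNode d m) :=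
  ((List.finRange d).map (hcon d m p)).toFinset

lemma mem_Hf {d m : ℕ} {p : Fin 2} {x : ZNode d m} :
    x ∈ Hf d m p ↔ ∃ i, x = hcon d m p i := by
  simp [Hf, eq_comm]

lemma mem_Hf_cases {d m : ℕ} {p : Fin 2} {x : ZNode d m} (h : x ∈ Hf d m p) :
    (∃ i, x = .h1 i) ∨ (∃ i, x = .h2 i) := by
  rcases mem_Hf.mp h with ⟨i, rfl⟩
  fin_cases p <;> simp [hcon]

lemma Hf_card {d m : ℕ} (p : Fin 2) : (Hf d m p).card = d := by
  rw [Hf, List.toFinset_card_of_nodup]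
  · simp
  · refine List.Nodup.map ?_ (List.nodup_finRange d)
    fin_cases p <;> (intro a b hab <;> simpa [hcon] using hab)

def nA (d m : ℕ) (k : Fin m) : ZNode d m := if Even (k : ℕ) then .u k else .v k
def nB (d m : ℕ) (k : Fin m) : ZNode d m := if Even (k : ℕ) then .v k else .u k

def nSelf (d m : ℕ) : Fin 2 → Fin m → ZNode d m := ![nA d m, nB d m]
def nOther (d m : ℕ) : Fin 2 → Fin m → ZNode d m := ![nB d m, nA d m]

lemma nSelf_or (d m : ℕ) (p : Fin 2) (k : Fin m) :
    nSelf d m p k = .v k ∨ nSelf d m p k = .u k := by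
  fin_cases p <;> simp [nSelf, nA, nB] <;>
    first | exact Nat.even_or_odd _ | exact (Nat.even_or_odd _).symm

lemma nOther_or (d m : ℕ) (p : Fin 2) (k : Fin m) :
    nOther d m p k = .v k ∨ nOther d m p k = .u k := by
  fin_cases p <;> simp [nOther, nA, nB] <;>
    first | exact Nat.even_or_odd _ | exact (Nat.even_or_odd _).symm

def stepSS (d m : ℕ) (k : Fin m) (dl : List (ZNode d m)) : Superstep (ZNode d m) 2 where
  comp := fun p => [.compute (nSelf d m p k)]
  save := fun p => [nSelf d m p k]
  del := fun _ => dl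
  load := fun p => [nOther d m p k]

def initSS (d m : ℕ) : Superstep (ZNode d m) 2 where
  comp := fun _ => []
  save := fun _ => []
  del := fun _ => []
  load := fun p => (List.finRange d).map (hcon d m p)

def delL (d m : ℕ) (j : ℕ) (h : j < m) : List (ZNode d m) :=
  .v ⟨j, h⟩ :: .u ⟨j, h⟩ ::
    (if j = 0 then [] else
      [.v ⟨j - 1, Nat.lt_of_le_of_lt (Nat.sub_le j 1) h⟩,
       .u ⟨j - 1, Nat.lt_of_le_of_lt (Nat.sub_le j 1) h⟩])

def tailSched (d m : ℕ) (j : ℕ) : Schedule (ZNode d m) 2 :=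
  if h : j < m then stepSS d m ⟨j, h⟩ (delL d m j h) :: tailSched d m (j + 1) else []
termination_by m - j
decreasing_by omega


section ZCost

variable {d m : ℕ} {r g L : ℝ}

lemma memOK_iff {R : Finset (ZNode d m)} :
    memOK (zipper d m r g L) R ↔ (R.card : ℝ) ≤ r := by
  simp [memOK, zipper]

lemma ioCost_eq (l : List (ZNode d m)) :
    ioCost (zipper d m r g L) l = l.length * g := by
  induction l with
  | nil => simp [ioCost]
  | cons a l ih =>
      simp only [ioCost, List.map_cons, List.sum_cons] at ih ⊢
      rw [ih]
      show (1 : ℝ) * g + _ = _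
      simp only [List.length_cons]
      push_cast
      ring

lemma listCost_single (x : ZNode d m) :
    listCost (zipper d m r g L) [Op.compute x] = 1 := by
  simp [listCost, opCost, zipper]

lemma ssCost_eval (S : Superstep (ZNode d m) 2) (a b c : ℝ)
    (h1 : ∀ p, listCost (zipper d m r g L) (S.comp p) = a)
    (h2 : ∀ p, ioCost (zipper d m r g L) (S.save p) = b)
    (h3 : ∀ p, ioCost (zipper d m r g L) (S.load p) = c) :
    ssCost (zipper d m r g L) S = a + b + c + L := by
  show (⨆ p : Fin 2, listCost (zipper d m r g L) (S.comp p)) +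
      (⨆ p : Fin 2, ioCost (zipper d m r g L) (S.save p)) +
      (⨆ p : Fin 2, ioCost (zipper d m r g L) (S.load p)) + L = a + b + c + L
  rw [show (fun p : Fin 2 => listCost (zipper d m r g L) (S.comp p)) = fun _ => a from funext h1,
    show (fun p : Fin 2 => ioCost (zipper d m r g L) (S.save p)) = fun _ => b from funext h2,
    show (fun p : Fin 2 => ioCost (zipper d m r g L) (S.load p)) = fun _ => c from funext h3,
    ciSup_const, ciSup_const, ciSup_const]

lemma ssCost_stepSS (k : Fin m) (dl : List (ZNode d m)) :
    ssCost (zipper d m r g L) (stepSS d m k dl) = 1 + g + g + L := by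
  refine ssCost_eval _ 1 g g ?_ ?_ ?_ <;> intro p
  · exact listCost_single _
  · rw [show (stepSS d m k dl).save p = [nSelf d m p k] from rfl, ioCost_eq]; simp
  · rw [show (stepSS d m k dl).load p = [nOther d m p k] from rfl, ioCost_eq]; simp

lemma ssCost_initSS :
    ssCost (zipper d m r g L) (initSS d m) = 0 + 0 + (d : ℝ) * g + L := by
  refine ssCost_eval _ 0 0 ((d:ℝ) * g) ?_ ?_ ?_ <;> intro p
  · simp [initSS, listCost]
  · simp [initSS, ioCost]
  · rw [show (initSS d m).load p = (List.finRange d).map (hcon d m p) from rfl, ioCost_eq]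
    simp

lemma syncCost_cons (S : Superstep (ZNode d m) 2) (sched : Schedule (ZNode d m) 2) :
    syncCost (zipper d m r g L) (S :: sched) =
      ssCost (zipper d m r g L) S + syncCost (zipper d m r g L) sched := by
  rfl

lemma tailSched_cost : ∀ n j, m - j = n →
    syncCost (zipper d m r g L) (tailSched d m j) = (n : ℝ) * (1 + g + g + L) := by
  intro n
  induction n with
  | zero =>
      intro j hj
      rw [tailSched, dif_neg (by omega)]
      simp [syncCost]
      rfl
  | succ n ih =>
      intro j hj
      have hjm : j < m := by omega
      rw [tailSched, dif_pos hjm]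
      erw [syncCost_cons]
      rw [ssCost_stepSS, ih (j+1) (by omega)]
      push_cast
      ring


lemma compute_ok (hd : 1 ≤ d) (p : Fin 2) (k : Fin m) (R B : Finset (ZNode d m))
    (hH : ∀ x ∈ Hf d m p, x ∈ R)
    (hprev : ∀ _ : 1 ≤ (k : ℕ),
      nOther d m p ⟨(k : ℕ) - 1, Nat.lt_of_le_of_lt (Nat.sub_le _ 1) k.isLt⟩ ∈ R) :
    opOK (zipper d m r g L) R B (.compute (nSelf d m p k)) := by
  have hk1m : (k : ℕ) - 1 < m := Nat.lt_of_le_of_lt (Nat.sub_le _ 1) k.isLt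
  have hmemH : ∀ i, hcon d m p i ∈ R := fun i => hH _ (mem_Hf.mpr ⟨i, rfl⟩)
  constructor
  · refine ⟨hcon d m p ⟨0, by omega⟩, ?_⟩
    show zEdge d m _ _
    fin_cases p <;> by_cases hpar : Even (k : ℕ) <;>
      simp [hcon, nSelf, nA, nB, zEdge, hpar, Nat.even_add_one, Nat.odd_add_one,
        Nat.not_even_iff_odd, Nat.not_odd_iff_even]
  · intro x hx
    fin_cases p <;> by_cases hpar : Even (k : ℕ) <;> cases x <;> rename_i j <;>
      simp only [zipper, zEdge, nSelf, nA, nB, hpar, Fin.zero_eta, Fin.mk_one,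
        Matrix.cons_val_zero, Matrix.cons_val_one,
        Matrix.head_cons, if_true, if_false, ite_true, ite_false, eq_self_iff_true,
        Nat.even_add_one, Nat.odd_add_one, Nat.not_even_iff_odd, Nat.not_odd_iff_even,
        not_true, not_false_iff, iff_true, iff_false] at hx <;>
    first
      | exact hx.elim
      | (exfalso; simp only [Nat.even_iff, Nat.odd_iff] at hx hpar; omega)
      | exact hmemH j
      | (simpa [hcon] using hmemH j)
      | (have h1k : 1 ≤ (k : ℕ) := by omega
         have hp := hprev h1k
         have hj' : (⟨(k : ℕ) - 1, hk1m⟩ : Fin m) = j := Fin.ext (by simp; omega)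
         rw [hj'] at hp
         simp only [nOther, nA, nB, Fin.zero_eta, Fin.mk_one, Matrix.cons_val_zero,
           Matrix.cons_val_one, Matrix.head_cons] at hp
         split_ifs at hp with hje
         all_goals first
           | exact hp
           | (exfalso
              simp only [Nat.even_iff, Nat.not_even_iff] at hpar hje
              omega))

lemma notchain_of_memHf {p : Fin 2} {x : ZNode d m} (h : x ∈ Hf d m p) (i : Fin m) :
    x ≠ .v i ∧ x ≠ .u i := by
  rcases mem_Hf_cases h with ⟨a, rfl⟩ | ⟨a, rfl⟩ <;> simp

/-- Invariant on caches before executing the steps from index `j` on. -/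
def InvR (d m : ℕ) (j : ℕ) (c : Config (ZNode d m) 2) : Prop :=
  (j = 0 ∧ ∀ p, c.R p = Hf d m p) ∨
  (∃ h : 1 ≤ j ∧ j - 1 < m, ∀ p, c.R p = insert (nOther d m p ⟨j - 1, h.2⟩) (Hf d m p))

lemma card_inv {j : ℕ} {c : Config (ZNode d m) 2} (hinv : InvR d m j c) (p : Fin 2) :
    (c.R p).card ≤ d + 1 := by
  rcases hinv with ⟨_, hRe⟩ | ⟨hh, hRe⟩ <;> rw [hRe p]
  · rw [Hf_card]; omega
  · calc _ ≤ (Hf d m p).card + 1 := Finset.card_insert_le _ _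
      _ ≤ d + 1 := by rw [Hf_card]

lemma afterDel_eq (j : ℕ) (hj : j < m) (c : Config (ZNode d m) 2)
    (hinv : InvR d m j c) (p : Fin 2) :
    afterDel c (stepSS d m ⟨j, hj⟩ (delL d m j hj)) p = Hf d m p := by
  have hcomp : afterComp c (stepSS d m ⟨j, hj⟩ (delL d m j hj)) p
      = insert (nSelf d m p ⟨j, hj⟩) (c.R p) := rfl
  show (delL d m j hj).foldl Finset.erase
      (afterComp c (stepSS d m ⟨j, hj⟩ (delL d m j hj)) p) = _
  rw [hcomp, foldl_erase]
  have hs := nSelf_or d m p ⟨j, hj⟩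
  rcases hinv with ⟨hj0, hRe⟩ | ⟨hh, hRe⟩
  · subst hj0
    rw [hRe p]
    ext x
    simp only [Finset.mem_sdiff, Finset.mem_insert, List.mem_toFinset, delL,
      if_pos rfl, reduceIte, List.mem_cons, List.not_mem_nil, or_false]
    constructor
    · rintro ⟨rfl | h1, h2⟩
      · exfalso; rcases hs with h | h <;> simp [h] at h2
      · exact h1
    · intro hxH
      have hnc := notchain_of_memHf hxH
      exact ⟨Or.inr hxH, by push_neg; exact ⟨(hnc _).1, (hnc _).2⟩⟩
  · rw [hRe p]
    have ho := nOther_or d m p ⟨j - 1, hh.2⟩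
    ext x
    simp only [Finset.mem_sdiff, Finset.mem_insert, List.mem_toFinset, delL,
      if_neg (by omega : ¬ j = 0), List.mem_cons, List.not_mem_nil, or_false]
    constructor
    · rintro ⟨rfl | rfl | h1, h2⟩
      · exfalso; rcases hs with h | h <;> simp [h] at h2
      · exfalso; rcases ho with h | h <;> simp [h] at h2
      · exact h1
    · intro hxH
      have hnc := notchain_of_memHf hxH
      refine ⟨Or.inr (Or.inr hxH), ?_⟩
      push_neg
      exact ⟨(hnc _).1, (hnc _).2, (hnc _).1, (hnc _).2⟩

lemma afterLoad_eq (j : ℕ) (hj : j < m) (c : Config (ZNode d m) 2)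
    (hinv : InvR d m j c) (p : Fin 2) :
    afterLoad c (stepSS d m ⟨j, hj⟩ (delL d m j hj)) p
      = insert (nOther d m p ⟨j, hj⟩) (Hf d m p) := by
  show afterDel c (stepSS d m ⟨j, hj⟩ (delL d m j hj)) p
      ∪ ([nOther d m p ⟨j, hj⟩] : List (ZNode d m)).toFinset = _
  rw [afterDel_eq j hj c hinv p]
  ext x
  simp [or_comm]

lemma tail_valid (hd : 2 ≤ d) (hr : (d : ℝ) + 2 ≤ r) :
    ∀ n j (c : Config (ZNode d m) 2), m - j ≤ n → (j < m → InvR d m j c) →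
      schedValidFrom (zipper d m r g L) c (tailSched d m j) := by
  intro n
  induction n with
  | zero =>
      intro j c hn _
      rw [tailSched, dif_neg (by omega)]
      trivial
  | succ n ih =>
      intro j c hn hinvf
      by_cases hjm : j < m
      · rw [tailSched, dif_pos hjm]
        have hinv := hinvf hjm
        refine ⟨⟨?_, ?_, ?_, ?_, ?_⟩, ?_⟩
        · -- compOnly
          intro p op hop
          rw [show (stepSS d m ⟨j, hjm⟩ (delL d m j hjm)).comp p
              = [Op.compute (nSelf d m p ⟨j, hjm⟩)] from rfl, List.mem_singleton] at hop
          subst hop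
          exact Or.inl ⟨_, rfl⟩
        · -- seqValid
          intro p
          refine ⟨?_, ?_, trivial⟩
          · apply compute_ok (by omega)
            · intro x hxH
              rcases hinv with ⟨_, hRe⟩ | ⟨hh, hRe⟩ <;> rw [hRe p]
              · exact hxH
              · exact Finset.mem_insert_of_mem hxH
            · intro h1k
              have h1j : 1 ≤ j := h1k
              rcases hinv with ⟨hj0, hRe⟩ | ⟨hh, hRe⟩
              · omega
              · rw [hRe p]
                exact Finset.mem_insert_self _ _
          · rw [show (applyOp (c.R p) c.B (Op.compute (nSelf d m p ⟨j, hjm⟩))).1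
                = insert (nSelf d m p ⟨j, hjm⟩) (c.R p) from rfl, memOK_iff]
            have h1 : (insert (nSelf d m p ⟨j, hjm⟩) (c.R p)).card ≤ (c.R p).card + 1 :=
              Finset.card_insert_le _ _
            have h2 := card_inv hinv p
            have h3 : ((insert (nSelf d m p ⟨j, hjm⟩) (c.R p)).card : ℝ) ≤ (d : ℝ) + 2 := by
              have : (insert (nSelf d m p ⟨j, hjm⟩) (c.R p)).card ≤ d + 2 := by omega
              exact_mod_cast this
            linarith
        · -- saves
          intro p v hv
          rw [show (stepSS d m ⟨j, hjm⟩ (delL d m j hjm)).save p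
              = [nSelf d m p ⟨j, hjm⟩] from rfl, List.mem_singleton] at hv
          subst hv
          exact Finset.mem_insert_self _ _
        · -- loads
          intro p v hv
          rw [show (stepSS d m ⟨j, hjm⟩ (delL d m j hjm)).load p
              = [nOther d m p ⟨j, hjm⟩] from rfl, List.mem_singleton] at hv
          subst hv
          have hq : ∃ q : Fin 2,
              nOther d m p ⟨j, hjm⟩ ∈ (stepSS d m ⟨j, hjm⟩ (delL d m j hjm)).save q := by
            fin_cases p
            · exact ⟨1, by simp [stepSS, nOther, nSelf]; rfl⟩
            · exact ⟨0, by simp [stepSS, nOther, nSelf]; rfl⟩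
          obtain ⟨q, hq⟩ := hq
          exact Finset.mem_union_right _
            (Finset.mem_biUnion.mpr ⟨q, Finset.mem_univ q, List.mem_toFinset.mpr hq⟩)
        · -- memOK afterLoad
          intro p
          erw [afterLoad_eq j hjm c hinv p]
          rw [memOK_iff]
          have h1 : (insert (nOther d m p ⟨j, hjm⟩) (Hf d m p)).card ≤ d + 1 := by
            calc _ ≤ (Hf d m p).card + 1 := Finset.card_insert_le _ _
              _ = d + 1 := by erw [Hf_card]
          have h3 : ((insert (nOther d m p ⟨j, hjm⟩) (Hf d m p)).card : ℝ) ≤ (d : ℝ) + 2 := by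
            have : (insert (nOther d m p ⟨j, hjm⟩) (Hf d m p)).card ≤ d + 2 := by omega
            exact_mod_cast this
          linarith
        · -- rest of schedule
          refine ih (j + 1) _ (by omega) ?_
          intro _
          right
          refine ⟨⟨by omega, by omega⟩, ?_⟩
          intro p
          show afterLoad c (stepSS d m ⟨j, hjm⟩ (delL d m j hjm)) p = _
          rw [afterLoad_eq j hjm c hinv p]
          rfl
      · rw [tailSched, dif_neg hjm]
        trivial

lemma mem_tailSched {k : ℕ} (hk : k < m) :
    ∀ n j, m - j ≤ n → j ≤ k →
      stepSS d m ⟨k, hk⟩ (delL d m k hk) ∈ tailSched d m j := by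
  intro n
  induction n with
  | zero => intro j h1 h2; omega
  | succ n ih =>
      intro j h1 h2
      rw [tailSched, dif_pos (by omega : j < m)]
      by_cases hjk : j = k
      · subst hjk
        exact List.mem_cons_self
      · exact List.mem_cons_of_mem _ (ih (j + 1) (by omega) (by omega))

lemma B_mono {ν : Type} [DecidableEq ν] {P : ℕ} :
    ∀ (sched : Schedule ν P) (c : Config ν P), c.B ⊆ (runSched c sched).B := by
  intro sched
  induction sched with
  | nil => intro c; exact subset_rfl
  | cons S rest ih =>
      intro c
      exact subset_trans (Finset.subset_union_left :
        c.B ⊆ newB c S) (ih (stepConfig c S))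

lemma saved_mem {ν : Type} [DecidableEq ν] {P : ℕ} :
    ∀ (sched : Schedule ν P) (c : Config ν P) (S : Superstep ν P) (p : Fin P) (v : ν),
      S ∈ sched → v ∈ S.save p → v ∈ (runSched c sched).B := by
  intro sched
  induction sched with
  | nil => intro c S p v hS; exact absurd hS List.not_mem_nil
  | cons S' rest ih =>
      intro c S p v hS hv
      rcases List.mem_cons.mp hS with rfl | hS'
      · refine B_mono rest (stepConfig c S) ?_
        exact Finset.mem_union_right _
          (Finset.mem_biUnion.mpr ⟨p, Finset.mem_univ p, List.mem_toFinset.mpr hv⟩)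
      · exact ih (stepConfig c S') S p v hS' hv

lemma initSS_afterLoad (B0 : Finset (ZNode d m)) (p : Fin 2) :
    afterLoad (⟨fun _ => ∅, B0⟩ : Config (ZNode d m) 2) (initSS d m) p = Hf d m p := by
  show (∅ : Finset (ZNode d m)) ∪ ((List.finRange d).map (hcon d m p)).toFinset = _
  rw [Finset.empty_union]
  rfl

lemma initSS_valid (hrd : (d : ℝ) ≤ r) (B0 : Finset (ZNode d m))
    (hB0 : Hf d m 0 ∪ Hf d m 1 ⊆ B0) :
    ssValid (zipper d m r g L) (⟨fun _ => ∅, B0⟩ : Config (ZNode d m) 2) (initSS d m) := by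
  refine ⟨?_, ?_, ?_, ?_, ?_⟩
  · intro p op hop
    exact absurd hop List.not_mem_nil
  · intro p
    trivial
  · intro p v hv
    exact absurd hv List.not_mem_nil
  · intro p v hv
    refine Finset.mem_union_left _ (hB0 ?_)
    rw [show (initSS d m).load p = (List.finRange d).map (hcon d m p) from rfl,
      List.mem_map] at hv
    obtain ⟨i, _, rfl⟩ := hv
    fin_cases p
    · exact Finset.mem_union_left _ (mem_Hf.mpr ⟨i, rfl⟩)
    · exact Finset.mem_union_right _ (mem_Hf.mpr ⟨i, rfl⟩)
  · intro p
    erw [initSS_afterLoad]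
    rw [memOK_iff]
    erw [Hf_card]
    exact hrd

lemma isSource_iff (hd : 1 ≤ d) (x : ZNode d m) :
    isSource (zipper d m r g L) x ↔ ((∃ i, x = .h1 i) ∨ (∃ i, x = .h2 i)) := by
  constructor
  · intro hs
    cases x with
    | h1 i => exact Or.inl ⟨i, rfl⟩
    | h2 i => exact Or.inr ⟨i, rfl⟩
    | v i =>
        exfalso
        apply hs
        rcases Nat.even_or_odd ((i : ℕ) + 1) with hp | hp
        · exact ⟨.h1 ⟨0, by omega⟩, hp⟩
        · exact ⟨.h2 ⟨0, by omega⟩, hp⟩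
    | u i =>
        exfalso
        apply hs
        rcases Nat.even_or_odd ((i : ℕ) + 1) with hp | hp
        · exact ⟨.h2 ⟨0, by omega⟩, hp⟩
        · exact ⟨.h1 ⟨0, by omega⟩, hp⟩
  · rintro (⟨i, rfl⟩ | ⟨i, rfl⟩) <;>
      (rintro ⟨u, hu⟩; cases u <;> exact hu)

lemma mem_Hf0 {x : ZNode d m} : x ∈ Hf d m 0 ↔ ∃ i, x = ZNode.h1 i := mem_Hf

lemma mem_Hf1 {x : ZNode d m} : x ∈ Hf d m 1 ↔ ∃ i, x = ZNode.h2 i := mem_Hf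

lemma initB_union (hd : 1 ≤ d) :
    initB (zipper d m r g L) (Hf d m 0 ∪ Hf d m 1) := by
  intro x
  rw [Finset.mem_union, isSource_iff hd, mem_Hf0, mem_Hf1]

lemma chain_is_nSelf (k : Fin m) :
    (∃ p, nSelf d m p k = .v k) ∧ (∃ p, nSelf d m p k = .u k) := by
  rcases Nat.even_or_odd (k : ℕ) with hp | hp
  · exact ⟨⟨1, by simp [nSelf, nB, hp]⟩, ⟨0, by simp [nSelf, nA, hp]⟩⟩
  · exact ⟨⟨0, by simp [nSelf, nA, Nat.not_even_iff_odd.mpr hp]⟩,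
      ⟨1, by simp [nSelf, nB, Nat.not_even_iff_odd.mpr hp]⟩⟩

lemma sink_cases (h1m : m - 1 < m) (x : ZNode d m)
    (hs : isSink (zipper d m r g L) x) :
    x = .v ⟨m - 1, h1m⟩ ∨ x = .u ⟨m - 1, h1m⟩ := by
  cases x with
  | h1 i => exact absurd ⟨.u ⟨0, by omega⟩, odd_one⟩ hs
  | h2 i => exact absurd ⟨.v ⟨0, by omega⟩, odd_one⟩ hs
  | v i =>
      by_cases h : (i : ℕ) + 1 < m
      · exact absurd ⟨.v ⟨(i : ℕ) + 1, h⟩, rfl⟩ hs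
      · left
        have := i.isLt
        exact congrArg _ (Fin.ext (show (i : ℕ) = m - 1 by omega))
  | u i =>
      by_cases h : (i : ℕ) + 1 < m
      · exact absurd ⟨.u ⟨(i : ℕ) + 1, h⟩, rfl⟩ hs
      · right
        have := i.isLt
        exact congrArg _ (Fin.ext (show (i : ℕ) = m - 1 by omega))

end ZCost

end ZAux
/-- For `d, m ≥ 2`, `g, L ≥ 0`, the zipper DAG `Z(d,m)` with `P = 2`
and `r = d+2` admits a valid schedule of synchronous cost at most
`m + (2m + 2d)·g + (m+1)·L`. -/
theorem statement_2 (d m : ℕ) (hd : 2 ≤ d) (hm : 2 ≤ m) (g L : ℝ)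
    (hg : 0 ≤ g) (hL : 0 ≤ L) :
    ∃ sched : Schedule (ZNode d m) 2,
      Valid (zipper d m ((d : ℝ) + 2) g L) sched ∧
      syncCost (zipper d m ((d : ℝ) + 2) g L) sched ≤
        (m : ℝ) + (2 * (m : ℝ) + 2 * (d : ℝ)) * g + ((m : ℝ) + 1) * L := by
  have hm1 : m - 1 < m := by omega
  refine ⟨initSS d m :: tailSched d m 0,
    ⟨Hf d m 0 ∪ Hf d m 1, initB_union (by omega), ⟨?_, ?_⟩, ?_⟩, ?_⟩
  · exact initSS_valid (by linarith) _ subset_rfl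
  · refine tail_valid hd le_rfl m 0 _ (by omega) ?_
    intro _
    left
    refine ⟨rfl, ?_⟩
    intro p
    show afterLoad _ (initSS d m) p = Hf d m p
    exact initSS_afterLoad _ p
  · intro x hs
    rcases sink_cases hm1 x hs with rfl | rfl
    · obtain ⟨p, hp⟩ := (chain_is_nSelf (d := d) (⟨m - 1, hm1⟩ : Fin m)).1
      refine saved_mem _ _ (stepSS d m ⟨m - 1, hm1⟩ (delL d m (m - 1) hm1)) p _ ?_ ?_
      · exact List.mem_cons_of_mem _ (mem_tailSched hm1 m 0 (by omega) (by omega))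
      · rw [show (stepSS d m ⟨m - 1, hm1⟩ (delL d m (m - 1) hm1)).save p
            = [nSelf d m p ⟨m - 1, hm1⟩] from rfl]
        simp [hp]
    · obtain ⟨p, hp⟩ := (chain_is_nSelf (d := d) (⟨m - 1, hm1⟩ : Fin m)).2
      refine saved_mem _ _ (stepSS d m ⟨m - 1, hm1⟩ (delL d m (m - 1) hm1)) p _ ?_ ?_
      · exact List.mem_cons_of_mem _ (mem_tailSched hm1 m 0 (by omega) (by omega))
      · rw [show (stepSS d m ⟨m - 1, hm1⟩ (delL d m (m - 1) hm1)).save p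
            = [nSelf d m p ⟨m - 1, hm1⟩] from rfl]
        simp [hp]
  · erw [syncCost_cons]
    rw [ssCost_initSS, tailSched_cost m 0 (Nat.sub_zero m)]
    have hdg : 0 ≤ (d : ℝ) * g := mul_nonneg (by positivity) hg
    nlinarith [hdg]

end MBSP
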